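/- arXiv:0909.1229 — 3 statements merged into one kernel-verified Lean document; each statement's English description precedes it below -/
import Mathlib

section
/- Let l ∈ ℕ with l ≥ 1. There exists C > 0 depending only on l such that for all collision variables (v, v_*, σ) with deviation angle θ ∈ [0, π/2], one has |W_l(v) − W_l(v')| ≤ C sin(θ/2) · ( W_l(v') + W_{l-1}(v') W_1(v'_*) + sin^{l-1}(θ/2) W_l(v'_*) ). -/
open Real

lemma wde_one_le_sqrt (a : ℝ) : 1 ≤ Real.sqrt (1 + a ^ 2) := by
  have h2 : Real.sqrt (1 + a ^ 2) ^ 2 = 1 + a ^ 2 := Real.sq_sqrt (by positivity)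
  nlinarith [Real.sqrt_nonneg (1 + a ^ 2), sq_nonneg a]

lemma wde_le_sqrt (a : ℝ) (ha : 0 ≤ a) : a ≤ Real.sqrt (1 + a ^ 2) := by
  have h2 : Real.sqrt (1 + a ^ 2) ^ 2 = 1 + a ^ 2 := Real.sq_sqrt (by positivity)
  nlinarith [Real.sqrt_nonneg (1 + a ^ 2)]

/-- `t ↦ √(1+t²)` is 1-Lipschitz on nonnegative reals. -/
lemma wde_sqrt_lip (a b : ℝ) (ha : 0 ≤ a) (hb : 0 ≤ b) :
    |Real.sqrt (1 + a ^ 2) - Real.sqrt (1 + b ^ 2)| ≤ |a - b| := by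
  set A := Real.sqrt (1 + a ^ 2) with hA
  set B := Real.sqrt (1 + b ^ 2) with hB
  have hA2 : A ^ 2 = 1 + a ^ 2 := Real.sq_sqrt (by positivity)
  have hB2 : B ^ 2 = 1 + b ^ 2 := Real.sq_sqrt (by positivity)
  have hA1 : 1 ≤ A := wde_one_le_sqrt a
  have hB1 : 1 ≤ B := wde_one_le_sqrt b
  have haA : a ≤ A := wde_le_sqrt a ha
  have hbB : b ≤ B := wde_le_sqrt b hb
  have key : |A - B| * (A + B) = |a - b| * (a + b) := by
    have h1 : |A - B| * (A + B) = |A ^ 2 - B ^ 2| := by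
      rw [show A ^ 2 - B ^ 2 = (A - B) * (A + B) by ring, abs_mul,
        abs_of_nonneg (by linarith : (0:ℝ) ≤ A + B)]
    have h2 : |a - b| * (a + b) = |a ^ 2 - b ^ 2| := by
      rw [show a ^ 2 - b ^ 2 = (a - b) * (a + b) by ring, abs_mul,
        abs_of_nonneg (by linarith : (0:ℝ) ≤ a + b)]
    rw [h1, h2, hA2, hB2]
    ring_nf
  have hle2 : |a - b| * (a + b) ≤ |a - b| * (A + B) := by
    apply mul_le_mul_of_nonneg_left (by linarith) (abs_nonneg _)
  have hpos : (0:ℝ) < A + B := by linarith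
  have := key.le.trans hle2
  exact le_of_mul_le_mul_right this hpos

lemma wde_pow_sub (A B : ℝ) (hA : 0 ≤ A) (hB : 0 ≤ B) (n : ℕ) :
    |A ^ n - B ^ n| ≤ n * max A B ^ (n - 1) * |A - B| := by
  have h := geom_sum₂_mul A B n
  have habs : |A ^ n - B ^ n|
      = |∑ i ∈ Finset.range n, A ^ i * B ^ (n - 1 - i)| * |A - B| := by
    rw [← abs_mul, h]
  rw [habs]
  apply mul_le_mul_of_nonneg_right _ (abs_nonneg _)
  calc |∑ i ∈ Finset.range n, A ^ i * B ^ (n - 1 - i)|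
      ≤ ∑ i ∈ Finset.range n, |A ^ i * B ^ (n - 1 - i)| :=
        Finset.abs_sum_le_sum_abs _ _
    _ ≤ ∑ _i ∈ Finset.range n, max A B ^ (n - 1) := by
        apply Finset.sum_le_sum
        intro i hi
        have hi' : i < n := Finset.mem_range.mp hi
        have h1 : A ^ i * B ^ (n - 1 - i) ≤ max A B ^ i * max A B ^ (n - 1 - i) := by
          apply mul_le_mul (pow_le_pow_left₀ hA (le_max_left _ _) i)
            (pow_le_pow_left₀ hB (le_max_right _ _) _) (by positivity) (by positivity)
        have h2 : max A B ^ i * max A B ^ (n - 1 - i) = max A B ^ (n - 1) := by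
          rw [← pow_add]
          congr 1
          omega
        rw [abs_of_nonneg (by positivity)]
        linarith [h1, h2.le, h2.ge]
    _ = n * max A B ^ (n - 1) := by
        rw [Finset.sum_const, Finset.card_range, nsmul_eq_mul]

lemma wde_add_pow (x y : ℝ) (hx : 0 ≤ x) (hy : 0 ≤ y) (n : ℕ) :
    (x + y) ^ n ≤ 2 ^ n * (x ^ n + y ^ n) := by
  have h1 : x + y ≤ 2 * max x y := by
    rcases le_total x y with h | h
    · rw [max_eq_right h]; linarith
    · rw [max_eq_left h]; linarith
  have h2 : max x y ^ n ≤ x ^ n + y ^ n := by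
    rcases le_total x y with h | h
    · rw [max_eq_right h]; nlinarith [pow_nonneg hx n]
    · rw [max_eq_left h]; nlinarith [pow_nonneg hy n]
  calc (x + y) ^ n ≤ (2 * max x y) ^ n := pow_le_pow_left₀ (by positivity) h1 n
    _ = 2 ^ n * max x y ^ n := mul_pow _ _ _
    _ ≤ 2 ^ n * (x ^ n + y ^ n) := by
        apply mul_le_mul_of_nonneg_left h2 (by positivity)

lemma wde_rpow_nat (x : ℝ) (hx : 0 ≤ x) (n : ℕ) :
    x ^ ((n:ℝ)/2) = Real.sqrt x ^ n := by
  rw [Real.sqrt_eq_rpow, ← Real.rpow_natCast (x ^ ((1:ℝ)/2)) n, ← Real.rpow_mul hx]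
  congr 1
  ring

set_option maxHeartbeats 1000000 in
/-- The key scalar inequality. -/
lemma wde_scalar (l : ℕ) (hl : 1 ≤ l) (a b c s : ℝ)
    (ha : 0 ≤ a) (hb : 0 ≤ b) (hc : 0 ≤ c) (hs : 0 ≤ s) (hs1 : s ≤ 1)
    (hab : |a - b| ≤ s * (b + c)) :
    |(1 + a ^ 2) ^ ((l:ℝ)/2) - (1 + b ^ 2) ^ ((l:ℝ)/2)| ≤
      (2 * l * 4 ^ (l - 1)) * s *
        ((1 + b ^ 2) ^ ((l:ℝ)/2)
          + (1 + b ^ 2) ^ (((l:ℝ)-1)/2) * (1 + c ^ 2) ^ ((1:ℝ)/2)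
          + s ^ (l - 1) * (1 + c ^ 2) ^ ((l:ℝ)/2)) := by
  have hcast : ((l:ℝ) - 1) = ((l - 1 : ℕ) : ℝ) := by
    rw [Nat.cast_sub hl]; norm_num
  have h1cast : (1:ℝ) = ((1:ℕ):ℝ) := by norm_num
  rw [wde_rpow_nat (1 + a ^ 2) (by positivity), wde_rpow_nat (1 + b ^ 2) (by positivity),
    wde_rpow_nat (1 + c ^ 2) (by positivity), hcast,
    wde_rpow_nat (1 + b ^ 2) (by positivity), ← Real.sqrt_eq_rpow]
  set A := Real.sqrt (1 + a ^ 2) with hA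
  set B := Real.sqrt (1 + b ^ 2) with hB
  set C := Real.sqrt (1 + c ^ 2) with hC
  have hA1 : 1 ≤ A := wde_one_le_sqrt a
  have hB1 : 1 ≤ B := wde_one_le_sqrt b
  have hC1 : 1 ≤ C := wde_one_le_sqrt c
  have hA0 : 0 ≤ A := by linarith
  have hB0 : 0 ≤ B := by linarith
  have hC0 : 0 ≤ C := by linarith
  have hbB : b ≤ B := wde_le_sqrt b hb
  have hcC : c ≤ C := wde_le_sqrt c hc
  have hABle : |A - B| ≤ s * (B + C) := by
    calc |A - B| ≤ |a - b| := wde_sqrt_lip a b ha hb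
      _ ≤ s * (b + c) := hab
      _ ≤ s * (B + C) := by apply mul_le_mul_of_nonneg_left (by linarith) hs
  set M := max A B with hM
  have hM0 : 0 ≤ M := le_trans hA0 (le_max_left _ _)
  have hMle : M ≤ 2 * B + s * C := by
    have h1 : A ≤ B + |A - B| := by
      have := le_abs_self (A - B); linarith
    have h2 : s * (B + C) ≤ B + s * C := by nlinarith
    apply max_le <;> nlinarith [abs_nonneg (A - B)]
  have hMpow : M ^ (l - 1) ≤ 4 ^ (l - 1) * (B ^ (l - 1) + s ^ (l - 1) * C ^ (l - 1)) := by
    have h24 : (2:ℝ) ^ (l - 1) ≤ 4 ^ (l - 1) :=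
      pow_le_pow_left₀ (by norm_num) (by norm_num) _
    have hp1 : (0:ℝ) ≤ s ^ (l - 1) * C ^ (l - 1) := by positivity
    have hp2 : (0:ℝ) ≤ B ^ (l - 1) := by positivity
    calc M ^ (l - 1) ≤ (2 * B + s * C) ^ (l - 1) := pow_le_pow_left₀ hM0 hMle _
      _ ≤ 2 ^ (l - 1) * ((2 * B) ^ (l - 1) + (s * C) ^ (l - 1)) :=
          wde_add_pow _ _ (by positivity) (by positivity) _
      _ = 4 ^ (l - 1) * B ^ (l - 1) + 2 ^ (l - 1) * (s ^ (l - 1) * C ^ (l - 1)) := by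
          rw [mul_pow, mul_pow]; ring_nf
          rw [show (4:ℝ) = 2 * 2 by norm_num, mul_pow]; ring
      _ ≤ 4 ^ (l - 1) * (B ^ (l - 1) + s ^ (l - 1) * C ^ (l - 1)) := by nlinarith
  have hBl : B ^ (l - 1) * B = B ^ l := by
    rw [← pow_succ]; congr 1; omega
  have hCl : C ^ (l - 1) * C = C ^ l := by
    rw [← pow_succ]; congr 1; omega
  have hBC : B * C ^ (l - 1) ≤ B ^ l + C ^ l := by
    rcases le_total B C with h | h
    · have : B * C ^ (l - 1) ≤ C * C ^ (l - 1) :=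
        mul_le_mul_of_nonneg_right h (by positivity)
      nlinarith [pow_nonneg hB0 l]
    · have : C ^ (l - 1) ≤ B ^ (l - 1) := pow_le_pow_left₀ hC0 h _
      have h2 : B * C ^ (l - 1) ≤ B * B ^ (l - 1) :=
        mul_le_mul_of_nonneg_left this (by linarith)
      nlinarith [pow_nonneg hC0 l]
  have hsl1 : s ^ (l - 1) ≤ 1 := pow_le_one₀ hs hs1
  have hsl0 : 0 ≤ s ^ (l - 1) := by positivity
  have key : (B + C) * (B ^ (l - 1) + s ^ (l - 1) * C ^ (l - 1)) ≤
      2 * (B ^ l + B ^ (l - 1) * C + s ^ (l - 1) * C ^ l) := by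
    have e1 : (B + C) * (B ^ (l - 1) + s ^ (l - 1) * C ^ (l - 1)) =
        B ^ (l - 1) * B + B ^ (l - 1) * C + s ^ (l - 1) * (B * C ^ (l - 1))
          + s ^ (l - 1) * (C ^ (l - 1) * C) := by ring
    rw [e1, hBl, hCl]
    have h3 : s ^ (l - 1) * (B * C ^ (l - 1)) ≤ s ^ (l - 1) * (B ^ l + C ^ l) :=
      mul_le_mul_of_nonneg_left hBC hsl0
    have h4 : s ^ (l - 1) * B ^ l ≤ B ^ l := by
      nlinarith [pow_nonneg hB0 l]
    nlinarith [pow_nonneg hB0 (l - 1), pow_nonneg hC0 l]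
  have hfinal := wde_pow_sub A B hA0 hB0 l
  have hl0 : (0:ℝ) < (l:ℝ) := by exact_mod_cast hl
  calc |A ^ l - B ^ l| ≤ l * M ^ (l - 1) * |A - B| := hfinal
    _ ≤ l * (4 ^ (l - 1) * (B ^ (l - 1) + s ^ (l - 1) * C ^ (l - 1))) * (s * (B + C)) := by
        apply mul_le_mul
        · apply mul_le_mul_of_nonneg_left hMpow (by positivity)
        · exact hABle
        · exact abs_nonneg _
        · positivity
    _ = (l * 4 ^ (l - 1) * s) * ((B + C) * (B ^ (l - 1) + s ^ (l - 1) * C ^ (l - 1))) := by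
        ring
    _ ≤ (l * 4 ^ (l - 1) * s) * (2 * (B ^ l + B ^ (l - 1) * C + s ^ (l - 1) * C ^ l)) := by
        apply mul_le_mul_of_nonneg_left key (by positivity)
    _ = (2 * l * 4 ^ (l - 1)) * s * (B ^ l + B ^ (l - 1) * C + s ^ (l - 1) * C ^ l) := by
        ring

/-- Refined weight difference estimate
`|W_l - W'_l| ≤ C sin(θ/2)(W'_l + W'_{l-1} W'_{1,*} + sin^{l-1}(θ/2) W'_{l,*})`. -/
theorem weight_difference_estimate_refined (l : ℕ) (hl : 1 ≤ l) :
    ∃ C > (0:ℝ), ∀ (v vs σ : EuclideanSpace ℝ (Fin 3)), ‖σ‖ = 1 → v ≠ vs →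
      ∀ θ ∈ Set.Icc (0:ℝ) (π/2),
      Real.cos θ = (inner ℝ (‖v - vs‖⁻¹ • (v - vs)) σ : ℝ) →
      ∀ (v' v's : EuclideanSpace ℝ (Fin 3)),
      v' = (1/2 : ℝ) • (v + vs) + (‖v - vs‖ / 2) • σ →
      v's = (1/2 : ℝ) • (v + vs) - (‖v - vs‖ / 2) • σ →
      |(1 + ‖v‖ ^ 2) ^ ((l:ℝ)/2) - (1 + ‖v'‖ ^ 2) ^ ((l:ℝ)/2)| ≤
        C * Real.sin (θ/2) *
          ((1 + ‖v'‖ ^ 2) ^ ((l:ℝ)/2)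
            + (1 + ‖v'‖ ^ 2) ^ (((l:ℝ)-1)/2) * (1 + ‖v's‖ ^ 2) ^ ((1:ℝ)/2)
            + Real.sin (θ/2) ^ (l - 1) * (1 + ‖v's‖ ^ 2) ^ ((l:ℝ)/2)) := by
  have hl0 : (0:ℝ) < (l:ℝ) := by exact_mod_cast hl
  refine ⟨2 * l * 4 ^ (l - 1), by positivity, ?_⟩
  intro v vs σ hσ hne θ hθ hcos v' v's hv' hv's
  obtain ⟨hθ0, hθπ⟩ := hθ
  have hpi := Real.pi_pos
  set r := ‖v - vs‖ with hr
  have hr0 : 0 < r := by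
    rw [hr, norm_pos_iff]
    exact sub_ne_zero.mpr hne
  set s := Real.sin (θ/2) with hs
  have hs0 : 0 ≤ s := Real.sin_nonneg_of_nonneg_of_le_pi (by linarith) (by linarith)
  have hs1 : s ≤ 1 := Real.sin_le_one _
  -- inner product
  have hi : (inner ℝ (v - vs) σ : ℝ) = r * Real.cos θ := by
    rw [hcos, real_inner_smul_left]
    field_simp
  -- v - v'
  have hvdiff : v - v' = (1/2 : ℝ) • (v - vs) - (r/2) • σ := by
    rw [hv']
    module
  have hsinsq : s ^ 2 = (1 - Real.cos θ) / 2 := by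
    have h1 := Real.sin_sq (θ/2)
    have h2 := Real.cos_sq (θ/2)
    rw [h2, show 2 * (θ/2) = θ by ring] at h1
    rw [hs, h1]; ring
  have hnorm2 : ‖v - v'‖ ^ 2 = (r * s) ^ 2 := by
    rw [hvdiff, norm_sub_sq_real, norm_smul, norm_smul, real_inner_smul_left,
      real_inner_smul_right, hi, hσ]
    rw [Real.norm_eq_abs, Real.norm_eq_abs, abs_of_nonneg (by norm_num : (0:ℝ) ≤ 1/2),
      abs_of_nonneg (by positivity : (0:ℝ) ≤ r/2), ← hr]
    rw [mul_pow r s, hsinsq]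
    ring
  have hvv' : ‖v - v'‖ = r * s := by
    have h1 : 0 ≤ r * s := by positivity
    nlinarith [norm_nonneg (v - v')]
  have hsub : v' - v's = r • σ := by
    rw [hv', hv's]
    module
  have hrle : r ≤ ‖v'‖ + ‖v's‖ := by
    calc r = ‖v' - v's‖ := by
          rw [hsub, norm_smul, hσ, Real.norm_eq_abs, abs_of_nonneg hr0.le, mul_one]
      _ ≤ ‖v'‖ + ‖v's‖ := norm_sub_le _ _
  have hab : |‖v‖ - ‖v'‖| ≤ s * (‖v'‖ + ‖v's‖) := by
    calc |‖v‖ - ‖v'‖| ≤ ‖v - v'‖ := abs_norm_sub_norm_le _ _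
      _ = r * s := hvv'
      _ ≤ s * (‖v'‖ + ‖v's‖) := by
          rw [mul_comm]
          exact mul_le_mul_of_nonneg_left hrle hs0
  exact wde_scalar l hl ‖v‖ ‖v'‖ ‖v's‖ s (norm_nonneg _) (norm_nonneg _)
    (norm_nonneg _) hs0 hs1 hab
end

section
/- For fixed v_* ∈ ℝ³, σ ∈ S² and τ ∈ [0,1], consider the map v ↦ z = ((1+τ)/2) v + ((1−τ)/2)(|v−v_*|σ + v_*) on ℝ³ \ {v_*}. Its Jacobian determinant equals ((1+τ)³/8) · |2τ/(1+τ) + 2((1−τ)/(1+τ)) cos²(θ/2)|, where cos θ = ((v−v_*)/|v−v_*|)·σ; in particular, if θ ∈ [0, π/2], this Jacobian is bounded below by 1/8, uniformly in v_*, σ, τ. -/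
open Real

lemma hasFDerivAt_norm_aux {E : Type*} [NormedAddCommGroup E] [InnerProductSpace ℝ E]
    {x : E} (hx : x ≠ 0) :
    HasFDerivAt (fun y : E => ‖y‖) (innerSL ℝ (‖x‖⁻¹ • x)) x := by
  have hxn : ‖x‖ ≠ 0 := norm_ne_zero_iff.mpr hx
  have h1 := (hasStrictFDerivAt_norm_sq x).hasFDerivAt
  have h2 : HasDerivAt Real.sqrt (1 / (2 * Real.sqrt (‖x‖ ^ 2))) (‖x‖ ^ 2) :=
    Real.hasDerivAt_sqrt (by positivity)
  have h3 := h2.comp_hasFDerivAt x h1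
  simp only [Function.comp_def] at h3
  have heq : (fun y : E => Real.sqrt (‖y‖ ^ 2)) = fun y : E => ‖y‖ := by
    funext y; rw [Real.sqrt_sq (norm_nonneg y)]
  rw [heq] at h3
  refine h3.congr_fderiv ?_
  ext y
  rw [Real.sqrt_sq (norm_nonneg x)]
  simp [real_inner_smul_left]
  field_simp

/-- Jacobian of the map `v ↦ z = ((1+τ)/2)v + ((1−τ)/2)(|v−v_*|σ + v_*)`. -/
theorem jacobian_z_map
    (vs σ : EuclideanSpace ℝ (Fin 3)) (hσ : ‖σ‖ = 1)
    (τ : ℝ) (hτ : τ ∈ Set.Icc (0:ℝ) 1)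
    (v : EuclideanSpace ℝ (Fin 3)) (hne : v ≠ vs)
    (θ : ℝ) (hθ : θ ∈ Set.Icc (0:ℝ) π)
    (hcos : Real.cos θ = (inner ℝ (‖v - vs‖⁻¹ • (v - vs)) σ : ℝ)) :
    LinearMap.det ((fderiv ℝ
        (fun w : EuclideanSpace ℝ (Fin 3) =>
          ((1+τ)/2 : ℝ) • w + ((1-τ)/2 : ℝ) • (‖w - vs‖ • σ + vs)) v).toLinearMap)
      = ((1+τ)^3/8) * |2*τ/(1+τ) + 2*((1-τ)/(1+τ)) * Real.cos (θ/2) ^ 2| ∧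
    (θ ≤ π/2 → (1/8 : ℝ) ≤ LinearMap.det ((fderiv ℝ
        (fun w : EuclideanSpace ℝ (Fin 3) =>
          ((1+τ)/2 : ℝ) • w + ((1-τ)/2 : ℝ) • (‖w - vs‖ • σ + vs)) v).toLinearMap)) := by
  obtain ⟨hτ0, hτ1⟩ := hτ
  have hvs : v - vs ≠ 0 := sub_ne_zero.mpr hne
  set a : ℝ := (1+τ)/2 with ha_def
  set b : ℝ := (1-τ)/2 with hb_def
  have ha : (0:ℝ) < a := by simp only [ha_def]; linarith
  have hb : (0:ℝ) ≤ b := by simp only [hb_def]; linarith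
  set u : EuclideanSpace ℝ (Fin 3) := ‖v - vs‖⁻¹ • (v - vs) with hu_def
  set L : EuclideanSpace ℝ (Fin 3) →L[ℝ] EuclideanSpace ℝ (Fin 3) :=
    a • ContinuousLinearMap.id ℝ _ + b • ((innerSL ℝ u).smulRight σ) with hL_def
  have hf : HasFDerivAt (fun w : EuclideanSpace ℝ (Fin 3) =>
      a • w + b • (‖w - vs‖ • σ + vs)) L v := by
    have h1 : HasFDerivAt (fun w : EuclideanSpace ℝ (Fin 3) => w - vs)
        (ContinuousLinearMap.id ℝ _) v := (hasFDerivAt_id v).sub_const vs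
    have h2 : HasFDerivAt (fun w : EuclideanSpace ℝ (Fin 3) => ‖w - vs‖)
        (innerSL ℝ u) v := by
      have := (hasFDerivAt_norm_aux hvs).comp v h1
      rw [ContinuousLinearMap.comp_id] at this
      exact this
    have h3 : HasFDerivAt (fun w : EuclideanSpace ℝ (Fin 3) => ‖w - vs‖ • σ + vs)
        ((innerSL ℝ u).smulRight σ) v := (h2.smul_const σ).add_const vs
    exact ((hasFDerivAt_id v).const_smul a).add (h3.const_smul b)
  rw [hf.fderiv]
  have hc : Real.cos θ = ∑ i : Fin 3, u i * σ i := by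
    rw [hcos]; simp [PiLp.inner_apply, RCLike.inner_apply, mul_comm]
  have hdet : LinearMap.det L.toLinearMap = a^2 * (a + b * Real.cos θ) := by
    classical
    rw [← LinearMap.det_toMatrix (EuclideanSpace.basisFun (Fin 3) ℝ).toBasis]
    have hM : LinearMap.toMatrix (EuclideanSpace.basisFun (Fin 3) ℝ).toBasis
        (EuclideanSpace.basisFun (Fin 3) ℝ).toBasis L.toLinearMap
        = a • (1 + Matrix.replicateCol (Fin 1) (fun i => a⁻¹ * b * σ i)
            * Matrix.replicateRow (Fin 1) (fun j => u j)) := by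
      ext i j
      rw [LinearMap.toMatrix_apply]
      simp only [hL_def, OrthonormalBasis.coe_toBasis, EuclideanSpace.basisFun_apply,
        ContinuousLinearMap.coe_coe, ContinuousLinearMap.add_apply,
        ContinuousLinearMap.smul_apply, ContinuousLinearMap.id_apply,
        ContinuousLinearMap.smulRight_apply, innerSL_apply_apply,
        OrthonormalBasis.repr_apply_apply, EuclideanSpace.basisFun_repr,
        Matrix.smul_apply, Matrix.add_apply, Matrix.mul_apply, Matrix.one_apply,
        Matrix.replicateCol_apply, Matrix.replicateRow_apply]
      have hinner : (inner ℝ u (EuclideanSpace.single j (1:ℝ)) : ℝ) = u j := by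
        simp [PiLp.inner_apply, RCLike.inner_apply, EuclideanSpace.single_apply]
      simp only [OrthonormalBasis.coe_toBasis_repr_apply, EuclideanSpace.basisFun_repr,
        PiLp.add_apply, PiLp.smul_apply, smul_eq_mul]
      rw [hinner]
      have hsj : (EuclideanSpace.single j (1:ℝ)) i = if i = j then (1:ℝ) else 0 :=
        EuclideanSpace.single_apply j 1 i
      rw [hsj]
      have hane : a ≠ 0 := ne_of_gt ha
      rcases eq_or_ne i j with h|h <;>
        simp [h, Finset.sum_const] <;> field_simp <;> ring
    rw [hM, Matrix.det_smul]
    erw [Matrix.det_one_add_replicateCol_mul_replicateRow (ι := Fin 1) (fun i => a⁻¹ * b * σ i) (fun j => u j)]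
    have : dotProduct (fun j => u j) (fun i => a⁻¹ * b * σ i) = a⁻¹ * b * Real.cos θ := by
      rw [hc, dotProduct, Finset.mul_sum]
      exact Finset.sum_congr rfl fun i _ => by ring
    rw [this, Fintype.card_fin]
    have hane : a ≠ 0 := ne_of_gt ha
    field_simp
  rw [hdet]
  have hcos2 : Real.cos (θ/2) ^ 2 = 1/2 + Real.cos θ / 2 := by
    have h2 : 2*(θ/2) = θ := by ring
    rw [Real.cos_sq, h2]
  have hτne : (1:ℝ) + τ ≠ 0 := by linarith
  have hcge : -1 ≤ Real.cos θ := Real.neg_one_le_cos θ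
  constructor
  · rw [hcos2]
    have habs : 2*τ/(1+τ) + 2*((1-τ)/(1+τ)) * (1/2 + Real.cos θ / 2)
        = (1 + τ + (1-τ)*Real.cos θ)/(1+τ) := by field_simp; ring
    rw [habs, abs_of_nonneg (by
      apply div_nonneg _ (by linarith)
      nlinarith)]
    rw [ha_def, hb_def]
    field_simp
    ring
  · intro hhalf
    have hcnonneg : 0 ≤ Real.cos θ :=
      Real.cos_nonneg_of_mem_Icc ⟨by linarith [hθ.1, Real.pi_pos], hhalf⟩
    have ha2 : (1/2:ℝ) ≤ a := by simp only [ha_def]; linarith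
    have hcube : (1/8:ℝ) ≤ a^3 := by nlinarith
    have hpos : 0 ≤ a^2 * (b * Real.cos θ) := by positivity
    have hexp : a^2 * (a + b * Real.cos θ) = a^3 + a^2 * (b * Real.cos θ) := by ring
    rw [hexp]
    linarith
end

section
/- For fixed v_* ∈ ℝ³, σ ∈ S² with deviation angle θ ∈ [0, π/2], and τ ∈ [0,1], the point z = ((1+τ)/2) v + ((1−τ)/2)(|v−v_*|σ + v_*) satisfies |z − v_*| = |v − v_*| · (τ² + (1−τ²) cos²(θ/2))^{1/2} ≥ |v − v_*|/√2. -/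
open Real

/-- `|z − v_*| = |v − v_*| (τ² + (1−τ²)cos²(θ/2))^{1/2} ≥ |v − v_*|/√2`. -/
theorem z_distance_formula
    (v vs σ : EuclideanSpace ℝ (Fin 3)) (hσ : ‖σ‖ = 1) (hne : v ≠ vs)
    (τ : ℝ) (hτ : τ ∈ Set.Icc (0:ℝ) 1)
    (θ : ℝ) (hθ : θ ∈ Set.Icc (0:ℝ) (π/2))
    (hcos : Real.cos θ = (inner ℝ (‖v - vs‖⁻¹ • (v - vs)) σ : ℝ))
    (z : EuclideanSpace ℝ (Fin 3))
    (hz : z = ((1+τ)/2 : ℝ) • v + ((1-τ)/2 : ℝ) • (‖v - vs‖ • σ + vs)) :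
    ‖z - vs‖ = ‖v - vs‖ * Real.sqrt (τ^2 + (1 - τ^2) * Real.cos (θ/2) ^ 2) ∧
    ‖v - vs‖ / Real.sqrt 2 ≤ ‖z - vs‖ := by
  set u : EuclideanSpace ℝ (Fin 3) := v - vs with hu
  set r : ℝ := ‖u‖ with hr
  have hrpos : 0 < r := by
    simpa [hr, hu, sub_eq_zero] using hne
  have hinner : (inner ℝ u σ : ℝ) = r * Real.cos θ := by
    rw [hcos, real_inner_smul_left]
    field_simp
  have hzvs : z - vs = ((1+τ)/2 : ℝ) • u + (((1-τ)/2) * r : ℝ) • σ := by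
    rw [hz, hu]; module
  have hE : 0 ≤ τ^2 + (1 - τ^2) * Real.cos (θ/2) ^ 2 := by
    have h1 : (1 : ℝ) - τ^2 ≥ 0 := by nlinarith [hτ.1, hτ.2]
    positivity
  have hsq : ‖z - vs‖^2 = r^2 * (τ^2 + (1 - τ^2) * Real.cos (θ/2) ^ 2) := by
    rw [hzvs, norm_add_sq_real, norm_smul, norm_smul, real_inner_smul_left,
      real_inner_smul_right, hinner, hσ]
    have hc : Real.cos θ = 2 * Real.cos (θ/2) ^ 2 - 1 := by
      have h := Real.cos_sq (θ/2)
      have h2 : 2 * (θ/2) = θ := by ring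
      rw [h2] at h
      linarith
    rw [hc]
    have h1 : |(1+τ)/2| = (1+τ)/2 := abs_of_nonneg (by linarith [hτ.1])
    have h2 : |(1-τ)/2 * r| = (1-τ)/2 * r := abs_of_nonneg
      (mul_nonneg (by linarith [hτ.2]) hrpos.le)
    rw [Real.norm_eq_abs, Real.norm_eq_abs, h1, h2]
    ring
  have hnorm : ‖z - vs‖ = r * Real.sqrt (τ^2 + (1 - τ^2) * Real.cos (θ/2) ^ 2) := by
    have : ‖z - vs‖ = Real.sqrt (‖z - vs‖^2) := by
      rw [Real.sqrt_sq (norm_nonneg _)]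
    rw [this, hsq, Real.sqrt_mul (sq_nonneg r), Real.sqrt_sq hrpos.le]
  refine ⟨hnorm, ?_⟩
  have hcosge : Real.cos (θ/2) ^ 2 ≥ 1/2 := by
    have hle : θ/2 ≤ π/4 := by linarith [hθ.2]
    have hge : Real.cos (π/4) ≤ Real.cos (θ/2) := by
      apply Real.cos_le_cos_of_nonneg_of_le_pi (by linarith [hθ.1]) _ hle
      linarith [Real.pi_pos]
    rw [Real.cos_pi_div_four] at hge
    nlinarith [Real.sqrt_nonneg 2, Real.sq_sqrt (by norm_num : (2:ℝ) ≥ 0)]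
  have hEge : τ^2 + (1 - τ^2) * Real.cos (θ/2) ^ 2 ≥ 1/2 := by
    have h1 : (0:ℝ) ≤ 1 - τ^2 := by nlinarith [hτ.1, hτ.2]
    nlinarith [mul_nonneg h1 (by linarith : (0:ℝ) ≤ Real.cos (θ/2) ^ 2 - 1/2)]
  have h2 : (Real.sqrt 2)⁻¹ = Real.sqrt (1/2) := by
    rw [one_div, Real.sqrt_inv]
  rw [hnorm, div_eq_mul_inv, h2]
  exact mul_le_mul_of_nonneg_left (Real.sqrt_le_sqrt (by linarith)) hrpos.le
end
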